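/- For n ≥ 4, let G be the fan on n vertices given in the adversarial order: v_1, …, v_{n−1} form the path P_{n−1} in the standard order, and the last vertex v_n is adjacent to all of v_1, …, v_{n−1}. Then every incremental dominating set of G has size at least ⌈(n−1)/2⌉, every incremental connected dominating set of G has size at least n − 2, and γ(G) = γ_C(G) = 1. -/

import Mathlib

/-- `D` is a dominating set of `G`: every vertex is in `D` or adjacent to a vertex of `D`. -/
def IsDomSet {V : Type*} (G : SimpleGraph V) (D : Finset V) : Prop :=
  ∀ v : V, v ∈ D ∨ ∃ u ∈ D, G.Adj u v

/-- The number of connected components of the subgraph of `G` induced by `S`. -/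
noncomputable def numComponents {V : Type*} (G : SimpleGraph V) (S : Finset V) : ℕ :=
  Nat.card (G.induce (↑S : Set V)).ConnectedComponent
/-- `D` is a dominating set of the prefix graph `G_i` (induced on the first `i`
vertices `v_1, …, v_i`, i.e. the vertices of `Fin n` with value `< i`);
here `D` is assumed to consist of vertices of the prefix, so that adjacency
in `G_i` coincides with adjacency in `G`. -/
def PrefixDom {n : ℕ} (G : SimpleGraph (Fin n)) (i : ℕ) (D : Finset (Fin n)) : Prop :=
  ∀ v : Fin n, v.val < i → v ∈ D ∨ ∃ u ∈ D, G.Adj u v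

/-- The natural ordering `v_1, …, v_n` of `Fin n` is always-connected:
every prefix graph `G_i` (for `1 ≤ i ≤ n`) is connected. -/
def AlwaysConnected {n : ℕ} (G : SimpleGraph (Fin n)) : Prop :=
  ∀ i : ℕ, 1 ≤ i → i ≤ n → (G.induce {v : Fin n | v.val < i}).Connected

/-- `D 1 ⊆ D 2 ⊆ ⋯ ⊆ D n` is a chain in which each `D i` is a subset of
`{v_1, …, v_i}` that is a dominating set of the prefix graph `G_i`. -/
def IncDomChain {n : ℕ} (G : SimpleGraph (Fin n)) (D : ℕ → Finset (Fin n)) : Prop :=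
  (∀ i : ℕ, 1 ≤ i → i < n → D i ⊆ D (i + 1)) ∧
  (∀ i : ℕ, 1 ≤ i → i ≤ n → (∀ v ∈ D i, v.val < i) ∧ PrefixDom G i (D i))

/-- `R` is an incremental dominating set of `G`: the final set `D n` of some
incremental dominating chain. -/
def IsIncDomSet {n : ℕ} (G : SimpleGraph (Fin n)) (R : Finset (Fin n)) : Prop :=
  ∃ D : ℕ → Finset (Fin n), IncDomChain G D ∧ R = D n

/-- An incremental connected dominating chain: additionally, each `D i`
induces a connected subgraph. -/
def IncConnDomChain {n : ℕ} (G : SimpleGraph (Fin n)) (D : ℕ → Finset (Fin n)) : Prop :=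
  IncDomChain G D ∧
    ∀ i : ℕ, 1 ≤ i → i ≤ n → (G.induce (↑(D i) : Set (Fin n))).Connected

/-- `R` is an incremental connected dominating set of `G`. -/
def IsIncConnDomSet {n : ℕ} (G : SimpleGraph (Fin n)) (R : Finset (Fin n)) : Prop :=
  ∃ D : ℕ → Finset (Fin n), IncConnDomChain G D ∧ R = D n

/-- The fan on `n` vertices in the adversarial order: `v_1, …, v_{n-1}` form a path
in the standard order (edges between consecutive values `< n - 1`), and the last
vertex `v_n` (value `n - 1`) is adjacent to all other vertices. -/
def fan (n : ℕ) : SimpleGraph (Fin n) :=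
  SimpleGraph.fromRel (fun u v =>
    (u.val + 1 = v.val ∧ v.val < n - 1) ∨ v.val = n - 1)

lemma incDomChain_mono {n : ℕ} {G : SimpleGraph (Fin n)} {D : ℕ → Finset (Fin n)}
    (h : IncDomChain G D) {i j : ℕ} (h1 : 1 ≤ i) (hij : i ≤ j) (hj : j ≤ n) :
    D i ⊆ D j := by
  induction j, hij using Nat.le_induction with
  | base => exact subset_rfl
  | succ j hij ih => exact (ih (by omega)).trans (h.1 j (by omega) (by omega))

lemma fanAdj' {n : ℕ} {u : Fin n} {j : ℕ} (hj : j < n) (h : (fan n).Adj u ⟨j, hj⟩) :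
    u.val ≠ j ∧ (u.val + 1 = j ∨ j + 1 = u.val ∨ u.val = n - 1 ∨ j = n - 1) := by
  simp only [fan, SimpleGraph.fromRel_adj] at h
  obtain ⟨hne, hr⟩ := h
  have hr' : ((u.val + 1 = j ∧ j < n - 1) ∨ j = n - 1) ∨
      ((j + 1 = u.val ∧ u.val < n - 1) ∨ u.val = n - 1) := hr
  exact ⟨fun hv => hne (Fin.ext hv), by omega⟩

lemma mem_D1 {n : ℕ} (hn : 0 < n) {G : SimpleGraph (Fin n)} {D : ℕ → Finset (Fin n)}
    (h : IncDomChain G D) : (⟨0, hn⟩ : Fin n) ∈ D 1 := by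
  obtain ⟨hmem, hdom⟩ := h.2 1 le_rfl hn
  rcases hdom ⟨0, hn⟩ Nat.zero_lt_one with hm | ⟨u, hu, hadj⟩
  · exact hm
  · have hu0 : u = ⟨0, hn⟩ := Fin.ext (show u.val = 0 by have := hmem u hu; omega)
    rw [hu0] at hadj
    exact absurd hadj (G.irrefl)

lemma exists_adj_of_reachable {V : Type*} {G : SimpleGraph V} {S : Set V} {x y : ↥S}
    (h : (G.induce S).Reachable x y) (hxy : (x : V) ≠ (y : V)) :
    ∃ u ∈ S, G.Adj (x : V) u := by
  obtain ⟨w⟩ := h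
  cases w with
  | nil => exact absurd rfl hxy
  | cons hadj _ => exact ⟨_, Subtype.coe_prop _, hadj⟩

lemma connChain_prefix {n : ℕ} (hn : 4 ≤ n) {D : ℕ → Finset (Fin n)}
    (h : IncConnDomChain (fan n) D) :
    ∀ i : ℕ, 1 ≤ i → i + 1 ≤ n → ∀ v : Fin n, v.val + 1 < i → v ∈ D i := by
  intro i hi
  induction i, hi using Nat.le_induction with
  | base => intro _ v hv; omega
  | succ i hi ih =>
    intro hin v hv
    have hmono : D i ⊆ D (i + 1) := h.1.1 i hi (by omega)
    by_cases hc : v.val + 1 < i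
    · exact hmono (ih (by omega) v hc)
    · have hvv : v.val + 1 = i := by omega
      rcases Nat.lt_or_ge i 2 with hi2 | hi2
      · have hv0 : v = ⟨0, by omega⟩ := Fin.ext (show v.val = 0 by omega)
        have h1 : (⟨0, by omega⟩ : Fin n) ∈ D 1 := mem_D1 (by omega) h.1
        have h1i : (1 : ℕ) = i := by omega
        rw [hv0]
        exact hmono (h1i ▸ h1)
      · obtain ⟨hmem, hdom⟩ := h.1.2 (i + 1) (by omega) (by omega)
        rcases hdom ⟨i, by omega⟩ (Nat.lt_succ_self i) with hm | ⟨u, hu, hadj⟩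
        · by_contra hvD
          have h0m : (⟨0, by omega⟩ : Fin n) ∈ D (i + 1) :=
            incDomChain_mono h.1 le_rfl (by omega) (by omega) (mem_D1 (by omega) h.1)
          have hconn := h.2 (i + 1) (by omega) (by omega)
          have hreach := hconn.preconnected ⟨⟨i, by omega⟩, Finset.mem_coe.mpr hm⟩
            ⟨⟨0, by omega⟩, Finset.mem_coe.mpr h0m⟩
          obtain ⟨w, hwS, hadj⟩ := exists_adj_of_reachable hreach
            (by simp only [ne_eq, Fin.mk.injEq]; omega)
          have hwb := hmem w (Finset.mem_coe.mp hwS)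
          have hfa := fanAdj' (by omega) hadj.symm
          have hwv : w = v := Fin.ext (show w.val = v.val by omega)
          exact hvD (hwv ▸ Finset.mem_coe.mp hwS)
        · have hub := hmem u hu
          have hfa := fanAdj' (by omega) hadj
          have huv : u = v := Fin.ext (show u.val = v.val by omega)
          exact huv ▸ hu

theorem fan_inc_dominating_lower_bounds (n : ℕ) (hn : 4 ≤ n) :
    (∀ R : Finset (Fin n), IsIncDomSet (fan n) R → (n - 1 + 1) / 2 ≤ R.card) ∧
    (∀ R : Finset (Fin n), IsIncConnDomSet (fan n) R → n - 2 ≤ R.card) ∧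
    IsLeast {m : ℕ | ∃ S : Finset (Fin n), IsDomSet (fan n) S ∧ S.card = m} 1 ∧
    IsLeast {m : ℕ | ∃ S : Finset (Fin n), IsDomSet (fan n) S ∧
      ((fan n).induce (↑S : Set (Fin n))).Connected ∧ S.card = m} 1 := by
  refine ⟨?_, ?_, ?_, ?_⟩
  · -- Part 1: incremental domination
    rintro R ⟨D, hch, hRD⟩
    have h0 : (⟨0, by omega⟩ : Fin n) ∈ R := by
      rw [hRD]
      exact incDomChain_mono hch le_rfl (by omega) le_rfl (mem_D1 (by omega) hch)
    have hpair : ∀ j : ℕ, (hj1 : 1 ≤ j) → (hj2 : j ≤ n - 2) →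
        ((⟨j, by omega⟩ : Fin n) ∈ R ∨ (⟨j - 1, by omega⟩ : Fin n) ∈ R) := by
      intro j hj1 hj2
      obtain ⟨hmem, hdom⟩ := hch.2 (j + 1) (by omega) (by omega)
      rcases hdom ⟨j, by omega⟩ (Nat.lt_succ_self j) with hm | ⟨u, hu, hadj⟩
      · left; rw [hRD]
        exact incDomChain_mono hch (by omega) (by omega) le_rfl hm
      · right
        have hub := hmem u hu
        have hfa := fanAdj' (by omega) hadj
        have huj : u = ⟨j - 1, by omega⟩ := Fin.ext (show u.val = j - 1 by omega)
        rw [hRD]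
        exact incDomChain_mono hch (by omega) (by omega) le_rfl (huj ▸ hu)
    have hcard : (Finset.range (n / 2)).card ≤ R.card := by
      classical
      apply Finset.card_le_card_of_injOn
        (fun k => if (⟨(2 * k - 1) % n, Nat.mod_lt _ (by omega)⟩ : Fin n) ∈ R
          then (⟨(2 * k - 1) % n, Nat.mod_lt _ (by omega)⟩ : Fin n)
          else ⟨(2 * k) % n, Nat.mod_lt _ (by omega)⟩)
      · intro k hk
        simp only [Finset.mem_coe, Finset.mem_range] at hk ⊢
        have e1 : (2 * k - 1) % n = 2 * k - 1 := Nat.mod_eq_of_lt (by omega)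
        have e2 : (2 * k) % n = 2 * k := Nat.mod_eq_of_lt (by omega)
        split_ifs with hm
        · exact hm
        · rcases Nat.eq_zero_or_pos k with rfl | hk1
          · exfalso
            apply hm
            convert h0 using 2
          · rcases hpair (2 * k) (by omega) (by omega) with hR1 | hR2
            · convert hR1 using 2
            · exfalso
              apply hm
              convert hR2 using 2
      · intro a ha b hb heq
        simp only [Finset.coe_range, Set.mem_Iio] at ha hb
        have e1a : (2 * a - 1) % n = 2 * a - 1 := Nat.mod_eq_of_lt (by omega)
        have e2a : (2 * a) % n = 2 * a := Nat.mod_eq_of_lt (by omega)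
        have e1b : (2 * b - 1) % n = 2 * b - 1 := Nat.mod_eq_of_lt (by omega)
        have e2b : (2 * b) % n = 2 * b := Nat.mod_eq_of_lt (by omega)
        simp only [] at heq
        split_ifs at heq <;> simp only [Fin.mk.injEq] at heq <;> omega
    rw [Finset.card_range] at hcard
    omega
  · -- Part 2: incremental connected domination
    rintro R ⟨D, hch, hRD⟩
    have hcard : (Finset.range (n - 2)).card ≤ R.card := by
      apply Finset.card_le_card_of_injOn (fun k => (⟨k % n, Nat.mod_lt _ (by omega)⟩ : Fin n))
      · intro k hk
        simp only [Finset.mem_coe, Finset.mem_range] at hk ⊢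
        have e : k % n = k := Nat.mod_eq_of_lt (by omega)
        rw [hRD]
        apply incDomChain_mono hch.1 (show 1 ≤ n - 1 by omega) (by omega) le_rfl
        exact connChain_prefix hn hch (n - 1) (by omega) (by omega) _
          (show k % n + 1 < n - 1 by omega)
      · intro a ha b hb heq
        simp only [Finset.coe_range, Set.mem_Iio] at ha hb
        have hab : a % n = b % n := congrArg Fin.val heq
        have ea : a % n = a := Nat.mod_eq_of_lt (by omega)
        have eb : b % n = b := Nat.mod_eq_of_lt (by omega)
        omega
    rw [Finset.card_range] at hcard
    exact hcard
  · -- Part 3: γ = 1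
    constructor
    · refine ⟨{⟨n - 1, by omega⟩}, ?_, Finset.card_singleton _⟩
      intro v
      by_cases hv : v = ⟨n - 1, by omega⟩
      · left; simp [hv]
      · right
        refine ⟨⟨n - 1, by omega⟩, Finset.mem_singleton_self _, ?_⟩
        simp only [fan, SimpleGraph.fromRel_adj]
        exact ⟨fun h => hv h.symm, Or.inr (Or.inr trivial)⟩
    · rintro m ⟨S, hS, hcard⟩
      rcases hS ⟨0, by omega⟩ with h | ⟨u, hu, _⟩
      · rw [← hcard]; exact Finset.card_pos.mpr ⟨_, h⟩
      · rw [← hcard]; exact Finset.card_pos.mpr ⟨_, hu⟩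
  · -- Part 4: γ_C = 1
    constructor
    · refine ⟨{⟨n - 1, by omega⟩}, ?_, ?_, Finset.card_singleton _⟩
      · intro v
        by_cases hv : v = ⟨n - 1, by omega⟩
        · left; simp [hv]
        · right
          refine ⟨⟨n - 1, by omega⟩, Finset.mem_singleton_self _, ?_⟩
          simp only [fan, SimpleGraph.fromRel_adj]
          exact ⟨fun h => hv h.symm, Or.inr (Or.inr trivial)⟩
      · rw [SimpleGraph.connected_iff]
        refine ⟨fun a b => ?_, ⟨⟨⟨n - 1, by omega⟩, by simp⟩⟩⟩
        have hab : a = b := by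
          have ha := a.2
          have hb := b.2
          simp only [Finset.coe_singleton, Set.mem_singleton_iff] at ha hb
          exact Subtype.ext (ha.trans hb.symm)
        rw [hab]
    · rintro m ⟨S, hS, _, hcard⟩
      rcases hS ⟨0, by omega⟩ with h | ⟨u, hu, _⟩
      · rw [← hcard]; exact Finset.card_pos.mpr ⟨_, h⟩
      · rw [← hcard]; exact Finset.card_pos.mpr ⟨_, hu⟩
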